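/- Let V be a finite-dimensional complex inner product space, T : V → V a self-adjoint linear operator, and v ∈ V a nonzero vector. Then 0 lies in the closure of the orbit {exp(tT) v : t ∈ ℝ} if and only if v lies in the sum of the eigenspaces of T with strictly positive eigenvalues, or v lies in the sum of the eigenspaces of T with strictly negative eigenvalues. -/

import Mathlib

open Filter Topology

section Aux

variable {V : Type*} [NormedAddCommGroup V] [InnerProductSpace ℂ V]

lemma exp_apply_eigenvector_aux [CompleteSpace V] (A : V →L[ℂ] V) {c : ℂ} {w : V}
    (hw : A w = c • w) : NormedSpace.exp A w = Complex.exp c • w := by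
  have hpow : ∀ n : ℕ, (A ^ n) w = c ^ n • w := by
    intro n
    induction n with
    | zero => simp
    | succ n ih =>
      have h1 : (A ^ (n + 1)) w = A ((A ^ n) w) := by
        rw [pow_succ']
        rfl
      rw [h1, ih, map_smul, hw, smul_smul, pow_succ]
  have h1 : HasSum (fun n : ℕ => ((n.factorial : ℂ))⁻¹ • A ^ n) (NormedSpace.exp A) :=
    NormedSpace.exp_series_hasSum_exp' A
  have h2 := h1.mapL (ContinuousLinearMap.apply ℂ V w)
  have h3 : HasSum (fun n : ℕ => (((n.factorial : ℂ))⁻¹ * c ^ n) • w) (NormedSpace.exp A w) := by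
    refine h2.congr_fun fun n => ?_
    simp [ContinuousLinearMap.apply_apply, hpow n, smul_smul]
  have h4 : HasSum (fun n : ℕ => (((n.factorial : ℂ))⁻¹ * c ^ n)) (Complex.exp c) := by
    have h5 := NormedSpace.exp_series_hasSum_exp' (𝕂 := ℂ) c
    simpa [smul_eq_mul, Complex.exp_eq_exp_ℂ] using h5
  exact h3.unique (h4.smul_const w)

end Aux

/-- **One-parameter instability criterion.** For a self-adjoint operator `T` on
a finite-dimensional complex inner product space and nonzero `v`, `0` lies in
the closure of the orbit `{exp(tT) v : t ∈ ℝ}` if and only if `v` lies in the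
sum of the eigenspaces of `T` with strictly positive eigenvalues, or in the sum
of the eigenspaces with strictly negative eigenvalues. -/
theorem zero_in_orbit_closure_iff (V : Type*) [NormedAddCommGroup V] [InnerProductSpace ℂ V]
    [FiniteDimensional ℂ V] (T : V →L[ℂ] V) (hT : IsSelfAdjoint T)
    (v : V) (hv : v ≠ 0) :
    (0 : V) ∈ closure {x : V | ∃ t : ℝ, x = NormedSpace.exp ((t : ℂ) • T) v} ↔
      (v ∈ ⨆ (μ : ℝ) (_ : 0 < μ), Module.End.eigenspace (T : V →ₗ[ℂ] V) (μ : ℂ)) ∨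
      (v ∈ ⨆ (μ : ℝ) (_ : μ < 0), Module.End.eigenspace (T : V →ₗ[ℂ] V) (μ : ℂ)) := by
  haveI : CompleteSpace V := FiniteDimensional.complete ℂ V
  classical
  set S : V →ₗ[ℂ] V := (T : V →ₗ[ℂ] V) with hSdef
  have hS : S.IsSymmetric := hT.isSymmetric
  -- exp acts on eigenvectors by scalar multiplication
  have key : ∀ (t : ℝ) (μ : ℂ) (w : V), w ∈ Module.End.eigenspace S μ →
      NormedSpace.exp ((t : ℂ) • T) w = Complex.exp ((t : ℂ) * μ) • w := by
    intro t μ w hw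
    rw [Module.End.mem_eigenspace_iff] at hw
    refine exp_apply_eigenvector_aux _ ?_
    have hTw : T w = μ • w := hw
    rw [ContinuousLinearMap.smul_apply, hTw, smul_smul]
  constructor
  · -- forward direction
    intro h0
    have htop : (⨆ μ : ℂ, Module.End.eigenspace S μ) = ⊤ :=
      Submodule.orthogonal_eq_bot_iff.mp hS.orthogonalComplement_iSup_eigenspaces_eq_bot
    have hv' : v ∈ ⨆ μ : ℂ, Module.End.eigenspace S μ := htop ▸ Submodule.mem_top
    rw [Submodule.mem_iSup_iff_exists_finsupp] at hv'
    obtain ⟨f, hf, hsum⟩ := hv'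
    have hvsum : v = ∑ ν ∈ f.support, f ν := by rw [← hsum]; rfl
    have hreal : ∀ μ ∈ f.support, ((μ.re : ℂ)) = μ := by
      intro μ hμ
      have hne : f μ ≠ 0 := Finsupp.mem_support_iff.mp hμ
      have hev : Module.End.HasEigenvalue S μ :=
        Module.End.hasEigenvalue_of_hasEigenvector ⟨hf μ, hne⟩
      exact Complex.conj_eq_iff_re.mp (hS.conj_eigenvalue_eq_self hev)
    -- lower bound on the orbit norm by each component
    have hbound : ∀ (t : ℝ), ∀ μ ∈ f.support,
        Real.exp (t * μ.re) ^ 2 * ‖f μ‖ ^ 2 ≤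
          ‖NormedSpace.exp ((t : ℂ) • T) v‖ ^ 2 := by
      intro t μ hμ
      set l : ∀ ν : ℂ, Module.End.eigenspace S ν :=
        fun ν => ⟨Complex.exp ((t : ℂ) * ν) • f ν, Submodule.smul_mem _ _ (hf ν)⟩ with hl
      have hexp : NormedSpace.exp ((t : ℂ) • T) v
          = ∑ ν ∈ f.support, Complex.exp ((t : ℂ) * ν) • f ν := by
        rw [hvsum, map_sum]
        exact Finset.sum_congr rfl fun ν _ => key t ν (f ν) (hf ν)
      have hns := hS.orthogonalFamily_eigenspaces.norm_sum l f.support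
      have hcoe : (∑ ν ∈ f.support,
            ((Module.End.eigenspace S ν).subtypeₗᵢ (l ν) : V))
          = NormedSpace.exp ((t : ℂ) • T) v := by
        rw [hexp]
        rfl
      rw [hcoe] at hns
      rw [hns]
      have hterm : ‖l μ‖ ^ 2 = Real.exp (t * μ.re) ^ 2 * ‖f μ‖ ^ 2 := by
        have h1 : ‖l μ‖ = ‖(l μ : V)‖ := rfl
        have h2 : ‖(l μ : V)‖ = Real.exp (t * μ.re) * ‖f μ‖ := by
          show ‖Complex.exp ((t : ℂ) * μ) • f μ‖ = _
          rw [norm_smul]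
          congr 1
          rw [Complex.norm_exp]
          congr 1
          simp [Complex.mul_re]
        rw [h1, h2, mul_pow]
      rw [← hterm]
      exact Finset.single_le_sum (f := fun ν => ‖l ν‖ ^ 2) (fun ν _ => sq_nonneg _) hμ
    have hsmall : ∀ δ : ℝ, 0 < δ →
        ∃ t : ℝ, ‖NormedSpace.exp ((t : ℂ) • T) v‖ < δ := by
      intro δ hδ
      rcases Metric.mem_closure_iff.mp h0 δ hδ with ⟨x, hx, hdist⟩
      obtain ⟨t, rfl⟩ := hx
      exact ⟨t, by simpa [dist_eq_norm] using hdist⟩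
    have h0notin : ∀ μ ∈ f.support, μ.re ≠ 0 := by
      intro μ hμ h0'
      have hne : f μ ≠ 0 := Finsupp.mem_support_iff.mp hμ
      obtain ⟨t, ht⟩ := hsmall ‖f μ‖ (norm_pos_iff.mpr hne)
      have hb := hbound t μ hμ
      rw [h0', mul_zero, Real.exp_zero, one_pow, one_mul] at hb
      have h2 : ‖NormedSpace.exp ((t : ℂ) • T) v‖ ^ 2 < ‖f μ‖ ^ 2 :=
        pow_lt_pow_left₀ ht (norm_nonneg _) two_ne_zero
      linarith
    have hmix : ¬ (∃ μ ∈ f.support, 0 < μ.re ∧ ∃ ν ∈ f.support, ν.re < 0) := by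
      rintro ⟨μ, hμ, hμpos, ν, hν, hνneg⟩
      have hfμ : (0 : ℝ) < ‖f μ‖ := norm_pos_iff.mpr (Finsupp.mem_support_iff.mp hμ)
      have hfν : (0 : ℝ) < ‖f ν‖ := norm_pos_iff.mpr (Finsupp.mem_support_iff.mp hν)
      set δ := min ‖f μ‖ ‖f ν‖ with hδdef
      have hδ : 0 < δ := lt_min hfμ hfν
      obtain ⟨t, ht⟩ := hsmall δ hδ
      have hlt : ‖NormedSpace.exp ((t : ℂ) • T) v‖ ^ 2 < δ ^ 2 :=
        pow_lt_pow_left₀ ht (norm_nonneg _) two_ne_zero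
      rcases le_or_gt 0 t with htpos | htneg
      · have hb := hbound t μ hμ
        have h1 : (1 : ℝ) ≤ Real.exp (t * μ.re) :=
          Real.one_le_exp (mul_nonneg htpos hμpos.le)
        have h3 : ‖f μ‖ ^ 2 ≤ Real.exp (t * μ.re) ^ 2 * ‖f μ‖ ^ 2 := by
          nlinarith [sq_nonneg ‖f μ‖, sq_nonneg (Real.exp (t * μ.re) - 1),
            Real.exp_pos (t * μ.re)]
        have h4 : δ ^ 2 ≤ ‖f μ‖ ^ 2 :=
          pow_le_pow_left₀ hδ.le (min_le_left _ _) 2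
        linarith
      · have hb := hbound t ν hν
        have h1 : (1 : ℝ) ≤ Real.exp (t * ν.re) :=
          Real.one_le_exp (by nlinarith : (0:ℝ) ≤ t * ν.re)
        have h3 : ‖f ν‖ ^ 2 ≤ Real.exp (t * ν.re) ^ 2 * ‖f ν‖ ^ 2 := by
          nlinarith [sq_nonneg ‖f ν‖, sq_nonneg (Real.exp (t * ν.re) - 1),
            Real.exp_pos (t * ν.re)]
        have h4 : δ ^ 2 ≤ ‖f ν‖ ^ 2 :=
          pow_le_pow_left₀ hδ.le (min_le_right _ _) 2
        linarith
    have hsupp_ne : f.support.Nonempty := by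
      rcases Finset.eq_empty_or_nonempty f.support with h | h
      · exfalso
        apply hv
        rw [hvsum, h, Finset.sum_empty]
      · exact h
    obtain ⟨μ₀, hμ₀⟩ := hsupp_ne
    rcases (h0notin μ₀ hμ₀).lt_or_gt with hneg | hpos
    · -- all eigenvalues in the support are negative
      right
      rw [hvsum]
      refine Submodule.sum_mem _ fun ν hν => ?_
      have hνneg : ν.re < 0 := by
        rcases (h0notin ν hν).lt_or_gt with h | h
        · exact h
        · exact absurd ⟨ν, hν, h, μ₀, hμ₀, hneg⟩ hmix
      have hmem : f ν ∈ Module.End.eigenspace S ((ν.re : ℝ) : ℂ) := by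
        rw [hreal ν hν]; exact hf ν
      exact le_iSup₂ (f := fun (r : ℝ) (_ : r < 0) =>
        Module.End.eigenspace S ((r : ℝ) : ℂ)) ν.re hνneg hmem
    · -- all eigenvalues in the support are positive
      left
      rw [hvsum]
      refine Submodule.sum_mem _ fun ν hν => ?_
      have hνpos : 0 < ν.re := by
        rcases (h0notin ν hν).lt_or_gt with h | h
        · exact absurd ⟨μ₀, hμ₀, hpos, ν, hν, h⟩ hmix
        · exact h
      have hmem : f ν ∈ Module.End.eigenspace S ((ν.re : ℝ) : ℂ) := by
        rw [hreal ν hν]; exact hf ν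
      exact le_iSup₂ (f := fun (r : ℝ) (_ : 0 < r) =>
        Module.End.eigenspace S ((r : ℝ) : ℂ)) ν.re hνpos hmem
  · -- backward direction
    intro h
    rcases h with hP | hN
    · -- positive eigenvalues: exp(tT)v → 0 as t → -∞
      have hten : Tendsto (fun t : ℝ => NormedSpace.exp ((t : ℂ) • T) v) atBot (𝓝 0) := by
        rw [iSup_subtype'] at hP
        refine Submodule.iSup_induction
          (fun x : {μ : ℝ // 0 < μ} => Module.End.eigenspace S ((x : ℝ) : ℂ))
          (motive := fun w => Tendsto (fun t : ℝ => NormedSpace.exp ((t : ℂ) • T) w)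
            atBot (𝓝 0)) hP ?_ ?_ ?_
        · rintro ⟨μ, hμ⟩ x hx
          have hx' : ∀ t : ℝ, NormedSpace.exp ((t : ℂ) • T) x
              = Complex.exp ((t : ℂ) * (μ : ℂ)) • x := fun t => key t _ x hx
          rw [tendsto_zero_iff_norm_tendsto_zero]
          have hnorm : ∀ t : ℝ, ‖NormedSpace.exp ((t : ℂ) • T) x‖
              = Real.exp (t * μ) * ‖x‖ := by
            intro t
            rw [hx' t, norm_smul, Complex.norm_exp]
            congr 2
            simp [Complex.mul_re]
          have h1 : Tendsto (fun t : ℝ => Real.exp (t * μ)) atBot (𝓝 0) :=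
            Real.tendsto_exp_atBot.comp (tendsto_id.atBot_mul_const hμ)
          have h2 : Tendsto (fun t : ℝ => Real.exp (t * μ) * ‖x‖) atBot (𝓝 0) := by
            simpa using h1.mul_const ‖x‖
          exact h2.congr fun t => (hnorm t).symm
        · simpa using tendsto_const_nhds (α := V) (f := atBot (α := ℝ))
        · intro x y hx hy
          have := hx.add hy
          rw [add_zero] at this
          refine this.congr fun t => ?_
          simp
      exact mem_closure_of_tendsto hten (Eventually.of_forall fun t => ⟨t, rfl⟩)
    · -- negative eigenvalues: exp(tT)v → 0 as t → +∞
      have hten : Tendsto (fun t : ℝ => NormedSpace.exp ((t : ℂ) • T) v) atTop (𝓝 0) := by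
        rw [iSup_subtype'] at hN
        refine Submodule.iSup_induction
          (fun x : {μ : ℝ // μ < 0} => Module.End.eigenspace S ((x : ℝ) : ℂ))
          (motive := fun w => Tendsto (fun t : ℝ => NormedSpace.exp ((t : ℂ) • T) w)
            atTop (𝓝 0)) hN ?_ ?_ ?_
        · rintro ⟨μ, hμ⟩ x hx
          have hx' : ∀ t : ℝ, NormedSpace.exp ((t : ℂ) • T) x
              = Complex.exp ((t : ℂ) * (μ : ℂ)) • x := fun t => key t _ x hx
          rw [tendsto_zero_iff_norm_tendsto_zero]
          have hnorm : ∀ t : ℝ, ‖NormedSpace.exp ((t : ℂ) • T) x‖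
              = Real.exp (t * μ) * ‖x‖ := by
            intro t
            rw [hx' t, norm_smul, Complex.norm_exp]
            congr 2
            simp [Complex.mul_re]
          have h1 : Tendsto (fun t : ℝ => Real.exp (t * μ)) atTop (𝓝 0) :=
            Real.tendsto_exp_atBot.comp (tendsto_id.atTop_mul_const_of_neg hμ)
          have h2 : Tendsto (fun t : ℝ => Real.exp (t * μ) * ‖x‖) atTop (𝓝 0) := by
            simpa using h1.mul_const ‖x‖
          exact h2.congr fun t => (hnorm t).symm
        · simpa using tendsto_const_nhds (α := V) (f := atTop (α := ℝ))
        · intro x y hx hy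
          have := hx.add hy
          rw [add_zero] at this
          refine this.congr fun t => ?_
          simp
      exact mem_closure_of_tendsto hten (Eventually.of_forall fun t => ⟨t, rfl⟩)
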